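/- For every natural number N, there exists an n × N matrix L over F corresponding to a linear (m,n,X,f)-IC if and only if there exists a family of vectors u^{(i)} ∈ F^n, i ∈ {1,…,m}, with u^{(i)} ⊲ X_i for all i and dim span{u^{(i)} + e_{f(i)} : i ∈ {1,…,m}} ≤ N. Consequently, the length of an optimal (shortest) linear (m,n,X,f)-IC over F equals κ_q(m,n,X,f) := min{dim span{u^{(i)} + e_{f(i)} : i ∈ {1,…,m}} : u^{(i)} ∈ F^n, u^{(i)} ⊲ X_i for all i}. -/

import Mathlib

/-- `L` corresponds to a linear `(m,n,X,f)`-IC: every receiver can recover its demanded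
message from the broadcast `x * L` together with its side information. -/
def IsIC {F : Type} [Field F] {m n N : ℕ} (X : Fin m → Set (Fin n)) (f : Fin m → Fin n)
    (L : Matrix (Fin n) (Fin N) F) : Prop :=
  ∀ i : Fin m, ∀ x x' : Fin n → F, Matrix.vecMul x L = Matrix.vecMul x' L →
    (∀ j ∈ X i, x j = x' j) → x (f i) = x' (f i)

open Matrix Submodule Module

variable {F : Type} [Field F] {m n N : ℕ}

-- functional as dot product helper
lemma exists_dot_orth {S : Submodule F (Fin n → F)} {v : Fin n → F} (hv : v ∉ S) :
    ∃ x : Fin n → F, (∀ w ∈ S, x ⬝ᵥ w = 0) ∧ x ⬝ᵥ v ≠ 0 := by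
  have hq : S.mkQ v ≠ 0 := by
    simpa [Submodule.Quotient.mk_eq_zero] using hv
  have : ¬ ∀ φ : Module.Dual F ((Fin n → F) ⧸ S), φ (S.mkQ v) = 0 := by
    rw [Module.forall_dual_apply_eq_zero_iff]; exact hq
  push_neg at this
  obtain ⟨φ, hφ⟩ := this
  set ψ : (Fin n → F) →ₗ[F] F := φ.comp S.mkQ with hψ
  have key : ∀ w : Fin n → F, (fun j => ψ (Pi.single j 1)) ⬝ᵥ w = ψ w := by
    intro w
    have hw : w = ∑ j, Pi.single j (w j) := (Finset.univ_sum_single w).symm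
    conv_rhs => rw [hw]
    rw [map_sum]
    simp only [dotProduct]
    refine Finset.sum_congr rfl fun j _ => ?_
    have : Pi.single j (w j) = w j • (Pi.single j (1 : F) : Fin n → F) := by
      funext r
      by_cases h : r = j <;> simp [Pi.single_apply, h]
    rw [this, _root_.map_smul, smul_eq_mul, mul_comm]
  refine ⟨fun j => ψ (Pi.single j 1), fun w hw => ?_, ?_⟩
  · rw [key]; simp [hψ, Submodule.mkQ_apply, (Submodule.Quotient.mk_eq_zero S).2 hw]
  · rw [key]; simpa [hψ] using hφ

lemma dot_span_cols (L : Matrix (Fin n) (Fin N) F) {x : Fin n → F}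
    (hx : Matrix.vecMul x L = 0) {v : Fin n → F}
    (hv : v ∈ Submodule.span F (Set.range Lᵀ)) : x ⬝ᵥ v = 0 := by
  induction hv using Submodule.span_induction with
  | mem w hw =>
    obtain ⟨j, rfl⟩ := hw
    have := congrFun hx j
    simpa [Matrix.vecMul, dotProduct, Matrix.transpose_apply] using this
  | zero => simp
  | add a b _ _ h1 h2 => rw [dotProduct_add, h1, h2, add_zero]
  | smul c a _ h1 => rw [dotProduct_smul, h1, smul_zero]

lemma span_single_supp {s : Set (Fin n)} {w : Fin n → F}
    (hw : w ∈ Submodule.span F ((fun j => (Pi.single j (1:F) : Fin n → F)) '' s)) :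
    ∀ j ∉ s, w j = 0 := by
  induction hw using Submodule.span_induction with
  | mem a ha =>
    obtain ⟨r, hr, rfl⟩ := ha
    intro j hj
    have : j ≠ r := fun h => hj (h ▸ hr)
    simp [Pi.single_apply, this]
  | zero => simp
  | add a b _ _ h1 h2 => intro j hj; simp [h1 j hj, h2 j hj]
  | smul c a _ h1 => intro j hj; simp [h1 j hj]

lemma isIC_of_span (L : Matrix (Fin n) (Fin N) F) {X : Fin m → Set (Fin n)} {f : Fin m → Fin n}
    (h : ∀ i, ∃ u : Fin n → F, (∀ j, u j ≠ 0 → j ∈ X i) ∧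
      u + Pi.single (f i) (1:F) ∈ Submodule.span F (Set.range Lᵀ)) : IsIC X f L := by
  intro i x x' hL hX
  obtain ⟨u, hu, hmem⟩ := h i
  have h0 : Matrix.vecMul (x - x') L = 0 := by
    rw [Matrix.sub_vecMul, hL, sub_self]
  have hdot := dot_span_cols L h0 hmem
  have hu0 : (x - x') ⬝ᵥ u = 0 := by
    apply Finset.sum_eq_zero
    intro j _
    by_cases hj : u j = 0
    · simp [hj]
    · simp [hX j (hu j hj), sub_self]
  rw [dotProduct_add, hu0, zero_add] at hdot
  have : (x - x') ⬝ᵥ (Pi.single (f i) (1:F) : Fin n → F) = x (f i) - x' (f i) := by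
    simp [dotProduct_single]
  rw [this] at hdot
  exact sub_eq_zero.mp hdot

lemma span_of_isIC (L : Matrix (Fin n) (Fin N) F) {X : Fin m → Set (Fin n)} {f : Fin m → Fin n}
    (hIC : IsIC X f L) (i : Fin m) :
    ∃ u : Fin n → F, (∀ j, u j ≠ 0 → j ∈ X i) ∧
      u + Pi.single (f i) (1:F) ∈ Submodule.span F (Set.range Lᵀ) := by
  by_contra hcon
  push_neg at hcon
  set S : Submodule F (Fin n → F) :=
    Submodule.span F (Set.range Lᵀ) ⊔
      Submodule.span F ((fun j => (Pi.single j (1:F) : Fin n → F)) '' (X i)) with hS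
  have hvS : (Pi.single (f i) (1:F) : Fin n → F) ∉ S := by
    intro hmem
    obtain ⟨c, hc, w, hw, hcw⟩ := Submodule.mem_sup.mp hmem
    refine hcon (-w) (fun j hj => ?_) ?_
    · by_contra hjX
      exact hj (by simp [span_single_supp hw j hjX])
    · have : -w + (Pi.single (f i) (1:F) : Fin n → F) = c := by
        rw [← hcw]; abel
      rw [this]; exact hc
  obtain ⟨x, hxS, hxv⟩ := exists_dot_orth hvS
  have hxL : Matrix.vecMul x L = Matrix.vecMul 0 L := by
    rw [Matrix.zero_vecMul]
    funext j
    have : (Lᵀ j) ∈ S := le_sup_left (a := Submodule.span F (Set.range Lᵀ))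
      (Submodule.subset_span ⟨j, rfl⟩)
    have := hxS _ this
    simpa [Matrix.vecMul, dotProduct, Matrix.transpose_apply] using this
  have hxX : ∀ j ∈ X i, x j = (0 : Fin n → F) j := by
    intro j hj
    have hmem : (Pi.single j (1:F) : Fin n → F) ∈ S :=
      le_sup_right (a := Submodule.span F (Set.range Lᵀ))
        (Submodule.subset_span ⟨j, hj, rfl⟩)
    have := hxS _ hmem
    simpa [dotProduct_single] using this
  have := hIC i x 0 hxL hxX
  apply hxv
  simpa [dotProduct_single] using this

set_option maxHeartbeats 1000000 in
lemma iffN (X : Fin m → Set (Fin n)) (f : Fin m → Fin n) (N : ℕ) :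
    (∃ L : Matrix (Fin n) (Fin N) F, IsIC X f L) ↔
      ∃ u : Fin m → Fin n → F, (∀ i, ∀ j, u i j ≠ 0 → j ∈ X i) ∧
        Module.finrank F (Submodule.span F
          (Set.range fun i : Fin m => u i + Pi.single (f i) (1 : F))) ≤ N := by
  constructor
  · rintro ⟨L, hL⟩
    choose u hu hmem using fun i => span_of_isIC L hL i
    refine ⟨u, hu, ?_⟩
    have hle : Submodule.span F (Set.range fun i : Fin m => u i + Pi.single (f i) (1 : F))
        ≤ Submodule.span F (Set.range Lᵀ) := by
      rw [Submodule.span_le]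
      rintro _ ⟨i, rfl⟩
      exact hmem i
    change _ ≤ Submodule.span F (Set.range L.col) at hle
    rw [← Matrix.range_mulVecLin] at hle
    refine (Submodule.finrank_mono hle).trans ?_
    have := LinearMap.finrank_range_le L.mulVecLin
    simpa [Module.finrank_fin_fun] using this
  · rintro ⟨u, hu, hk⟩
    set V := Submodule.span F (Set.range fun i : Fin m => u i + Pi.single (f i) (1 : F)) with hV
    have : FiniteDimensional F V := inferInstance
    set b := Module.finBasis F V with hb
    set L : Matrix (Fin n) (Fin N) F :=
      Matrix.of fun r j => if h : (j : ℕ) < Module.finrank F V then (b ⟨j, h⟩ : Fin n → F) r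
        else 0 with hL
    refine ⟨L, isIC_of_span L fun i => ⟨u i, hu i, ?_⟩⟩
    have hVle : V ≤ Submodule.span F (Set.range Lᵀ) := by
      have h1 : V = Submodule.map V.subtype (Submodule.span F (Set.range b)) := by
        rw [b.span_eq, Submodule.map_subtype_top]
      rw [h1, Submodule.map_span, ← Set.range_comp]
      apply Submodule.span_mono
      rintro _ ⟨i, rfl⟩
      refine ⟨⟨i, lt_of_lt_of_le i.2 hk⟩, ?_⟩
      funext r
      simp only [Matrix.transpose_apply, hL, Matrix.of_apply, Function.comp_apply]
      rw [dif_pos]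
      · rfl
      · exact i.2
    exact hVle (Submodule.subset_span ⟨i, rfl⟩)


/-- For every `N` there exists a linear `(m,n,X,f)`-IC of length `N` iff there
is a choice of vectors `u⁽ⁱ⁾ ⊲ X i` with `dim span{u⁽ⁱ⁾ + e_{f i}} ≤ N`; consequently the
optimal length of a linear `(m,n,X,f)`-IC equals
`κ_q = min{dim span{u⁽ⁱ⁾ + e_{f i}} : u⁽ⁱ⁾ ⊲ X i}`. -/
theorem stmt_5 {F : Type} [Field F] {m n : ℕ}
    (X : Fin m → Set (Fin n)) (f : Fin m → Fin n) (hf : ∀ i, f i ∉ X i) :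
    (∀ N : ℕ, (∃ L : Matrix (Fin n) (Fin N) F, IsIC X f L) ↔
      ∃ u : Fin m → Fin n → F, (∀ i, ∀ j, u i j ≠ 0 → j ∈ X i) ∧
        Module.finrank F (Submodule.span F
          (Set.range fun i : Fin m => u i + Pi.single (f i) (1 : F))) ≤ N) ∧
    sInf {N : ℕ | ∃ L : Matrix (Fin n) (Fin N) F, IsIC X f L} =
      sInf {k : ℕ | ∃ u : Fin m → Fin n → F, (∀ i, ∀ j, u i j ≠ 0 → j ∈ X i) ∧
        Module.finrank F (Submodule.span F
          (Set.range fun i : Fin m => u i + Pi.single (f i) (1 : F))) = k} := by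
  refine ⟨fun N => iffN X f N, ?_⟩
  have hBne : {k : ℕ | ∃ u : Fin m → Fin n → F, (∀ i, ∀ j, u i j ≠ 0 → j ∈ X i) ∧
        Module.finrank F (Submodule.span F
          (Set.range fun i : Fin m => u i + Pi.single (f i) (1 : F))) = k}.Nonempty :=
    ⟨_, 0, fun i j h => absurd rfl h, rfl⟩
  obtain ⟨u0, hu0, hdim⟩ := Nat.sInf_mem hBne
  have hmem : (∃ L : Matrix (Fin n) (Fin (sInf {k : ℕ | ∃ u : Fin m → Fin n → F,
      (∀ i, ∀ j, u i j ≠ 0 → j ∈ X i) ∧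
      Module.finrank F (Submodule.span F
        (Set.range fun i : Fin m => u i + Pi.single (f i) (1 : F))) = k})) F, IsIC X f L) :=
    (iffN X f _).mpr ⟨u0, hu0, le_of_eq hdim⟩
  apply le_antisymm
  · exact Nat.sInf_le hmem
  · have hAne : {N : ℕ | ∃ L : Matrix (Fin n) (Fin N) F, IsIC X f L}.Nonempty := ⟨_, hmem⟩
    obtain ⟨L, hL⟩ := Nat.sInf_mem hAne
    obtain ⟨u, hu, hle⟩ := (iffN X f _).mp ⟨L, hL⟩
    exact le_trans (Nat.sInf_le ⟨u, hu, rfl⟩) hle
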